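/- For every n ≥ 1, the number of permutations in S_n avoiding both 213 and 231 is 2^{n-1}. -/

import Mathlib

open Finset
open scoped Classical

/-- Number of components of a permutation of `Fin n` (0-based version of
`|{i ∈ [n] : π(j) ≤ i for all j ≤ i}|`). -/
def comps {n : ℕ} (π : Equiv.Perm (Fin n)) : ℕ :=
  (Finset.univ.filter fun i : Fin n => ∀ j, j ≤ i → π j ≤ i).card

/-- Number of descents. -/
def des {n : ℕ} (π : Equiv.Perm (Fin n)) : ℕ :=
  (Finset.univ.filter fun i : Fin n =>
    ∃ h : (i : ℕ) + 1 < n, π ⟨(i : ℕ) + 1, h⟩ < π i).card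

/-- Length of the initial ascending run: `min(DES(π) ∪ {n})` with 1-based descent positions. -/
noncomputable def iar {n : ℕ} (π : Equiv.Perm (Fin n)) : ℕ :=
  sInf {k : ℕ | k = n ∨ 0 < k ∧ ∃ h : k < n, π ⟨k, h⟩ < π ⟨k - 1, by omega⟩}

/-- `π` contains the pattern `σ`. -/
def ContainsPat {n m : ℕ} (π : Equiv.Perm (Fin n)) (σ : Equiv.Perm (Fin m)) : Prop :=
  ∃ f : Fin m → Fin n, StrictMono f ∧ ∀ a b : Fin m, σ a < σ b ↔ π (f a) < π (f b)

/-- `π` avoids the pattern `σ`. -/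
def AvoidsPat {n m : ℕ} (π : Equiv.Perm (Fin n)) (σ : Equiv.Perm (Fin m)) : Prop :=
  ¬ ContainsPat π σ

def pat123 : Equiv.Perm (Fin 3) := ⟨![0, 1, 2], ![0, 1, 2], by decide, by decide⟩
def pat132 : Equiv.Perm (Fin 3) := ⟨![0, 2, 1], ![0, 2, 1], by decide, by decide⟩
def pat213 : Equiv.Perm (Fin 3) := ⟨![1, 0, 2], ![1, 0, 2], by decide, by decide⟩
def pat231 : Equiv.Perm (Fin 3) := ⟨![1, 2, 0], ![2, 0, 1], by decide, by decide⟩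
def pat312 : Equiv.Perm (Fin 3) := ⟨![2, 0, 1], ![1, 2, 0], by decide, by decide⟩
def pat321 : Equiv.Perm (Fin 3) := ⟨![2, 1, 0], ![2, 1, 0], by decide, by decide⟩

/-- Direct sum of two permutations. -/
def directSum {m l : ℕ} (π : Equiv.Perm (Fin m)) (σ : Equiv.Perm (Fin l)) :
    Equiv.Perm (Fin (m + l)) :=
  finSumFinEquiv.permCongr (Equiv.sumCongr π σ)

/-- Direct sum of a finite family of permutations. -/
def dsum : {k : ℕ} → (a : Fin k → ℕ) → ((i : Fin k) → Equiv.Perm (Fin (a i))) →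
    Equiv.Perm (Fin (∑ i, a i))
  | 0, _, _ => Equiv.refl _
  | _ + 1, a, τ =>
      (finCongr (Fin.sum_univ_succ a).symm).permCongr
        (directSum (τ 0) (dsum (fun i => a i.succ) (fun i => τ i.succ)))

/-- Set of values of left-to-right maxima. -/
noncomputable def LMAX {n : ℕ} (π : Equiv.Perm (Fin n)) : Finset (Fin n) :=
  Finset.univ.filter fun v => ∃ i, π i = v ∧ ∀ j, j < i → π j < v

/-- Set of values of left-to-right minima. -/
noncomputable def LMIN {n : ℕ} (π : Equiv.Perm (Fin n)) : Finset (Fin n) :=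
  Finset.univ.filter fun v => ∃ i, π i = v ∧ ∀ j, j < i → v < π j

/-- Set of descent bottoms. -/
noncomputable def DESB {n : ℕ} (π : Equiv.Perm (Fin n)) : Finset (Fin n) :=
  Finset.univ.filter fun v => ∃ i : ℕ, ∃ h : i + 1 < n,
    π ⟨i + 1, h⟩ = v ∧ π ⟨i + 1, h⟩ < π ⟨i, by omega⟩

def NoMid {n : ℕ} (π : Equiv.Perm (Fin n)) : Prop :=
  ∀ i j k : Fin n, i < j → i < k → π j < π i → π i < π k → False

lemma strictMono_triple {n : ℕ} (i j k : Fin n) (hij : i < j) (hjk : j < k) :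
    StrictMono ![i, j, k] := by
  have hik := hij.trans hjk
  intro a b hab
  fin_cases a <;> fin_cases b <;> simp_all

lemma avoid_iff {n : ℕ} (π : Equiv.Perm (Fin n)) :
    (AvoidsPat π pat213 ∧ AvoidsPat π pat231) ↔ NoMid π := by
  constructor
  · rintro ⟨h1, h2⟩ i j k hij hik hji hik'
    have hjk' : π j < π k := hji.trans hik'
    rcases lt_trichotomy j k with h | h | h
    · exact h1 ⟨![i, j, k], strictMono_triple i j k hij h, by
        have := hji.asymm; have := hik'.asymm; have := hjk'.asymm
        intro a b; fin_cases a <;> fin_cases b <;> simp_all [pat213]⟩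
    · exact absurd (h ▸ hjk') (lt_irrefl _)
    · exact h2 ⟨![i, k, j], strictMono_triple i k j hik h, by
        have := hji.asymm; have := hik'.asymm; have := hjk'.asymm
        intro a b; fin_cases a <;> fin_cases b <;> simp_all [pat231]⟩
  · intro h
    constructor
    · rintro ⟨f, hf, hiff⟩
      exact h (f 0) (f 1) (f 2) (hf (by decide)) (hf (by decide))
        ((hiff 1 0).mp (by decide)) ((hiff 0 2).mp (by decide))
    · rintro ⟨f, hf, hiff⟩
      exact h (f 0) (f 2) (f 1) (hf (by decide)) (hf (by decide))
        ((hiff 2 0).mp (by decide)) ((hiff 0 1).mp (by decide))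

def Tc (b : ℕ → Bool) (i : ℕ) : ℕ := ((Finset.range i).filter fun j => b j).card
def Fc (b : ℕ → Bool) (i : ℕ) : ℕ := ((Finset.range i).filter fun j => ¬ b j).card

lemma Tc_add_Fc (b : ℕ → Bool) (i : ℕ) : Tc b i + Fc b i = i := by
  have := Finset.card_filter_add_card_filter_not (s := Finset.range i)
    (p := fun j => (b j : Prop))
  simpa [Tc, Fc] using this

lemma Tc_mono (b : ℕ → Bool) {i j : ℕ} (h : i ≤ j) : Tc b i ≤ Tc b j :=
  Finset.card_le_card (Finset.filter_subset_filter _ (Finset.range_subset_range.mpr h))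

lemma Fc_mono (b : ℕ → Bool) {i j : ℕ} (h : i ≤ j) : Fc b i ≤ Fc b j :=
  Finset.card_le_card (Finset.filter_subset_filter _ (Finset.range_subset_range.mpr h))

lemma Tc_lt (b : ℕ → Bool) {i j : ℕ} (hb : b i = true) (hij : i < j) : Tc b i < Tc b j := by
  have h1 : Tc b (i+1) = Tc b i + 1 := by
    simp [Tc, Finset.range_add_one, Finset.filter_insert, hb]
  have := Tc_mono b (show i + 1 ≤ j from hij)
  omega

lemma Fc_lt (b : ℕ → Bool) {i j : ℕ} (hb : b i = false) (hij : i < j) : Fc b i < Fc b j := by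
  have h1 : Fc b (i+1) = Fc b i + 1 := by
    simp [Fc, Finset.range_add_one, Finset.filter_insert, hb]
  have := Fc_mono b (show i + 1 ≤ j from hij)
  omega

def gN (b : ℕ → Bool) (n i : ℕ) : ℕ := if b i then Tc b i else n - 1 - Fc b i

lemma gN_lt_n (b : ℕ → Bool) {n i : ℕ} (hn : 0 < n) (hi : i < n) : gN b n i < n := by
  have h := Tc_add_Fc b i
  unfold gN; split_ifs <;> omega

lemma gN_lt_of_true (b : ℕ → Bool) {n i j : ℕ} (hb : b i = true) (hij : i < j) (hj : j < n) :
    gN b n i < gN b n j := by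
  have h1 := Tc_lt b hb hij
  have h2 := Tc_add_Fc b j
  unfold gN
  rw [if_pos hb]
  split_ifs with h <;> omega

lemma gN_lt_of_false (b : ℕ → Bool) {n i j : ℕ} (hb : b i = false) (hij : i < j) (hj : j < n) :
    gN b n j < gN b n i := by
  have h1 := Fc_lt b hb hij
  have h2 := Tc_add_Fc b j
  have h3 := Tc_add_Fc b i
  have hgi : gN b n i = n - 1 - Fc b i := by simp [gN, hb]
  rw [hgi]
  unfold gN
  split_ifs with h <;> omega

lemma gN_inj (b : ℕ → Bool) {n i j : ℕ} (hi : i < n) (hj : j < n)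
    (h : gN b n i = gN b n j) : i = j := by
  rcases lt_trichotomy i j with hlt | he | hlt
  · cases hb : b i
    · exact absurd h (gN_lt_of_false b hb hlt hj).ne'
    · exact absurd h (gN_lt_of_true b hb hlt hj).ne
  · exact he
  · cases hb : b j
    · exact absurd h (gN_lt_of_false b hb hlt hi).ne
    · exact absurd h (gN_lt_of_true b hb hlt hi).ne'

def bext (m : ℕ) (c : Fin m → Bool) : ℕ → Bool :=
  fun i => if h : i < m then c ⟨i, h⟩ else true

noncomputable def Gperm {m : ℕ} (c : Fin m → Bool) : Equiv.Perm (Fin (m + 1)) :=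
  Equiv.ofBijective
    (fun i => ⟨gN (bext m c) (m + 1) i, gN_lt_n _ (Nat.succ_pos m) i.isLt⟩)
    (Finite.injective_iff_bijective.mp (fun i j h => by
      apply Fin.ext
      exact gN_inj (bext m c) i.isLt j.isLt (by simpa [Fin.ext_iff] using h)))

lemma Gperm_apply {m : ℕ} (c : Fin m → Bool) (i : Fin (m + 1)) :
    ((Gperm c i : Fin (m+1)) : ℕ) = gN (bext m c) (m + 1) i := rfl

lemma noMid_Gperm {m : ℕ} (c : Fin m → Bool) : NoMid (Gperm c) := by
  intro i j k hij hik h1 h2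
  cases hb : bext m c i with
  | true =>
      have := gN_lt_of_true (bext m c) hb (show (i:ℕ) < (j:ℕ) from hij) j.isLt
      rw [Fin.lt_def, Gperm_apply, Gperm_apply] at h1
      omega
  | false =>
      have := gN_lt_of_false (bext m c) hb (show (i:ℕ) < (k:ℕ) from hik) k.isLt
      rw [Fin.lt_def, Gperm_apply, Gperm_apply] at h2
      omega

lemma bits_Gperm {m : ℕ} (c : Fin m → Bool) (i : Fin m) :
    decide (Gperm c i.castSucc < Gperm c i.succ) = c i := by
  have hbe : bext m c (i : ℕ) = c i := dif_pos i.isLt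
  have hcs : ((i.castSucc : Fin (m+1)) : ℕ) = (i : ℕ) := rfl
  have hsu : ((i.succ : Fin (m+1)) : ℕ) = (i : ℕ) + 1 := rfl
  cases hc : c i with
  | true =>
      have := gN_lt_of_true (bext m c) (hbe.trans hc) (Nat.lt_succ_self i)
        (by omega : (i:ℕ) + 1 < m + 1)
      simp only [decide_eq_true_eq]
      exact this
  | false =>
      have := gN_lt_of_false (bext m c) (hbe.trans hc) (Nat.lt_succ_self i)
        (by omega : (i:ℕ) + 1 < m + 1)
      simp only [decide_eq_false_iff_not]
      exact fun h => lt_asymm this h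

lemma perm_uniq {m : ℕ} (π σ : Equiv.Perm (Fin (m + 1))) (hπ : NoMid π) (hσ : NoMid σ)
    (hb : ∀ i : Fin m, (π i.castSucc < π i.succ ↔ σ i.castSucc < σ i.succ)) : π = σ := by
  have H : ∀ v : ℕ, ∀ hv : v < m + 1, π ⟨v, hv⟩ = σ ⟨v, hv⟩ := by
    intro v
    induction v using Nat.strong_induction_on with
    | _ v IH =>
      intro hv
      by_contra hne
      -- j with π j = σ ⟨v⟩
      set x : Fin (m+1) := ⟨v, hv⟩
      set j := π.symm (σ x) with hjdef
      have hπj : π j = σ x := Equiv.apply_symm_apply _ _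
      have hjx : j ≠ x := by
        intro h; apply hne; rw [← hπj, h]
      have hjv : (x : ℕ) < (j : ℕ) := by
        rcases lt_or_gt_of_ne (fun h : (j:ℕ) = (x:ℕ) => hjx (Fin.ext h)) with h | h
        · exfalso
          have := IH j h j.isLt
          have : π j = σ j := by simpa [Fin.eta] using this
          exact hjx (σ.injective (by rw [← this, hπj]))
        · exact h
      set k := σ.symm (π x) with hkdef
      have hσk : σ k = π x := Equiv.apply_symm_apply _ _
      have hkx : k ≠ x := by
        intro h; apply hne; rw [← hσk, h]
      have hkv : (x : ℕ) < (k : ℕ) := by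
        rcases lt_or_gt_of_ne (fun h : (k:ℕ) = (x:ℕ) => hkx (Fin.ext h)) with h | h
        · exfalso
          have := IH k h k.isLt
          have : π k = σ k := by simpa [Fin.eta] using this
          exact hkx (π.injective (by rw [this, hσk]))
        · exact h
      have hxv : (x : ℕ) = v := rfl
      have hv1 : v + 1 < m + 1 := by
        have h1 := j.isLt
        have h2 := hjv
        omega
      set i0 : Fin m := ⟨v, by omega⟩
      have hics : i0.castSucc = x := rfl
      have hisu : (i0.succ : Fin (m+1)) = ⟨v + 1, hv1⟩ := rfl
      have hxlt : x < j := hjv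
      have hxlt' : x < k := hkv
      have hx1 : x < (⟨v+1, hv1⟩ : Fin (m+1)) := by simp [Fin.lt_def, hxv]
      rcases lt_or_gt_of_ne (π.injective.ne (show x ≠ ⟨v+1,hv1⟩ by
          intro h; exact absurd (congrArg Fin.val h) (by simp [hxv]))) with hasc | hdesc
      · -- ascent for π, hence for σ
        have hσasc : σ x < σ ⟨v+1, hv1⟩ := by
          have := (hb i0).mp (by rw [hics, hisu]; exact hasc)
          rwa [hics, hisu] at this
        -- π x is min of suffix: π x < π j
        have h1 : π x < π j := by
          rcases lt_or_gt_of_ne (π.injective.ne hjx.symm) with h | h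
          · exact h
          · exact absurd (hπ x j ⟨v+1,hv1⟩ hxlt hx1 h hasc) (fun t => t)
        have h2 : σ x < σ k := by
          rcases lt_or_gt_of_ne (σ.injective.ne hkx.symm) with h | h
          · exact h
          · exact absurd (hσ x k ⟨v+1,hv1⟩ hxlt' hx1 h hσasc) (fun t => t)
        rw [hπj] at h1; rw [hσk] at h2
        exact absurd (h1.trans h2) (lt_irrefl _)
      · have hσdesc : σ ⟨v+1, hv1⟩ < σ x := by
          by_contra h
          have h' : σ x < σ ⟨v+1,hv1⟩ :=
            lt_of_le_of_ne (not_lt.mp h) (σ.injective.ne (show x ≠ ⟨v+1,hv1⟩ by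
              intro hh; exact absurd (congrArg Fin.val hh) (by simp [hxv])))
          have := (hb i0).mpr (by rw [hics, hisu]; exact h')
          rw [hics, hisu] at this
          exact absurd this (not_lt.mpr hdesc.le)
        have h1 : π j < π x := by
          rcases lt_or_gt_of_ne (π.injective.ne hjx) with h | h
          · exact h
          · exact absurd (hπ x ⟨v+1,hv1⟩ j hx1 hxlt hdesc h) (fun t => t)
        have h2 : σ k < σ x := by
          rcases lt_or_gt_of_ne (σ.injective.ne hkx) with h | h
          · exact h
          · exact absurd (hσ x ⟨v+1,hv1⟩ k hx1 hxlt' hσdesc h) (fun t => t)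
        rw [hπj] at h1; rw [hσk] at h2
        exact absurd (h1.trans h2) (lt_irrefl _)
  exact Equiv.ext fun i => by simpa [Fin.eta] using H i i.isLt

/-- `|S_n(213,231)| = 2^{n-1}` for `n ≥ 1`. -/
theorem card_avoid_213_231 (n : ℕ) (hn : 1 ≤ n) :
    (Finset.univ.filter fun π : Equiv.Perm (Fin n) =>
      AvoidsPat π pat213 ∧ AvoidsPat π pat231).card = 2 ^ (n - 1) := by
  obtain ⟨m, rfl⟩ : ∃ m, n = m + 1 := ⟨n - 1, by omega⟩
  have key : (Finset.univ.filter fun π : Equiv.Perm (Fin (m+1)) =>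
      AvoidsPat π pat213 ∧ AvoidsPat π pat231).card
      = (Finset.univ : Finset (Fin m → Bool)).card := by
    apply Finset.card_bij'
      (i := fun π _ => fun i : Fin m => decide (π i.castSucc < π i.succ))
      (j := fun c _ => Gperm c)
    · intro π hπ; exact mem_univ _
    · intro c _
      simp only [mem_filter]
      exact ⟨mem_univ _, (avoid_iff _).mpr (noMid_Gperm c)⟩
    · intro π hπ
      apply perm_uniq _ _ (noMid_Gperm _)
        ((avoid_iff π).mp (by simpa using (mem_filter.mp hπ).2))
      intro i
      have h := bits_Gperm (fun i : Fin m => decide (π i.castSucc < π i.succ)) i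
      simp only [decide_eq_decide] at h
      exact h
    · intro c _
      funext i
      exact bits_Gperm c i
  rw [key, Finset.card_univ]
  simp [Fintype.card_fun]
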